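/- Let q ∈ (1,2) and suppose x ∈ I_q ∖ J_q maps uniquely to y ∈ I_q, i.e. there is a finite word ε_1⋯ε_m ∈ {0,1}^* with f_{ε_m} ∘ ⋯ ∘ f_{ε_1}(x) = y such that f_{ε_k} ∘ ⋯ ∘ f_{ε_1}(x) ∈ I_q ∖ J_q for all 1 ≤ k ≤ m−1. Then x and y have the same number of base q expansions: |Σ_q(x)| = |Σ_q(y)|. -/

import Mathlib

open Set

/-- Projection map: the value of the (0-indexed) digit sequence `a` in base `q`,
`π_q(a) = Σ_{j=0}^∞ a_j q^{-(j+1)}`. -/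
noncomputable def piQ (q : ℝ) (a : ℕ → ℝ) : ℝ := ∑' j : ℕ, a j / q ^ (j + 1)

/-- `a` is a sequence of digits in `{0,1}`. -/
def IsDigitSeq (a : ℕ → ℝ) : Prop := ∀ j, a j = 0 ∨ a j = 1

/-- `a` is a sequence of digits in `{-1,0,1}`. -/
def IsExtDigitSeq (a : ℕ → ℝ) : Prop := ∀ j, a j = -1 ∨ a j = 0 ∨ a j = 1

/-- The set of base-`q` expansions of `x`. -/
def SigmaSet (q x : ℝ) : Set (ℕ → ℝ) := {a | IsDigitSeq a ∧ piQ q a = x}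

/-- The interval `I_q = [0, 1/(q-1)]`. -/
def Iq (q : ℝ) : Set ℝ := Set.Icc 0 (1 / (q - 1))

/-- The switch region `J_q = [1/q, 1/(q(q-1))]`. -/
def Jq (q : ℝ) : Set ℝ := Set.Icc (1 / q) (1 / (q * (q - 1)))

/-- The set of points of `I_q` having exactly `m` base-`q` expansions. -/
def UqM (q : ℝ) (m : ℕ∞) : Set ℝ := {x | x ∈ Iq q ∧ (SigmaSet q x).encard = m}

/-- The set of points of `I_q` having a unique base-`q` expansion. -/
def Uq (q : ℝ) : Set ℝ := UqM q 1

/-- `B_m`: the set of bases `q ∈ (1,2)` for which some point has exactly `m` expansions. -/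
def Bset (m : ℕ∞) : Set ℝ := {q | q ∈ Set.Ioo (1 : ℝ) 2 ∧ (UqM q m).Nonempty}

/-- `x` is the `k`-Bonacci number: the root in `(1,2)` of `x^k = x^{k-1} + ⋯ + x + 1`. -/
def IsBonacci (k : ℕ) (x : ℝ) : Prop :=
  x ∈ Set.Ioo (1 : ℝ) 2 ∧ x ^ k = ∑ i ∈ Finset.range k, x ^ i

/-- `a` contains no occurrence of the word `01^k` as a consecutive block. -/
def AvoidsWord01 (k : ℕ) (a : ℕ → ℝ) : Prop :=
  ∀ i, ¬(a i = 0 ∧ ∀ j, 1 ≤ j → j ≤ k → a (i + j) = 1)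

/-- `a` contains no occurrence of the word `10^k` as a consecutive block. -/
def AvoidsWord10 (k : ℕ) (a : ℕ → ℝ) : Prop :=
  ∀ i, ¬(a i = 1 ∧ ∀ j, 1 ≤ j → j ≤ k → a (i + j) = 0)

/-- `S_k`: the set of `{0,1}`-sequences avoiding the words `01^k` and `10^k`. -/
def Sset (k : ℕ) : Set (ℕ → ℝ) := {a | IsDigitSeq a ∧ AvoidsWord01 k a ∧ AvoidsWord10 k a}

/-- `g_{q,k} = f_1^{-(k-1)} ∘ f_0^{-1}`, where `f_0^{-1}(y) = y/q` and `f_1^{-1}(y) = (y+1)/q`. -/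
noncomputable def gMap (q : ℝ) (k : ℕ) (x : ℝ) : ℝ := (fun y => (y + 1) / q)^[k - 1] (x / q)

/-- The maps `f_0(x) = qx` (for `b = false`) and `f_1(x) = qx - 1` (for `b = true`). -/
noncomputable def fDigit (q : ℝ) (b : Bool) (x : ℝ) : ℝ := if b then q * x - 1 else q * x

/-- `(a, b)` is a bounded gap of `C`: a bounded connected component of `ℝ \ C`. -/
def IsGap (C : Set ℝ) (a b : ℝ) : Prop :=
  a < b ∧ a ∈ C ∧ b ∈ C ∧ Set.Ioo a b ∩ C = ∅

/-- The left endpoint of the bridge of `C` lying immediately to the left of the gap `(a, b)`: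
the right endpoint of the nearest gap to the left having diameter at least `b - a`
(or `min C` if there is no such gap). -/
noncomputable def leftBridgeStart (C : Set ℝ) (a b : ℝ) : ℝ :=
  sSup ({sInf C} ∪ {d | ∃ c, IsGap C c d ∧ d ≤ a ∧ b - a ≤ d - c})

/-- The right endpoint of the bridge of `C` lying immediately to the right of the gap `(a, b)`. -/
noncomputable def rightBridgeEnd (C : Set ℝ) (a b : ℝ) : ℝ :=
  sInf ({sSup C} ∪ {c | ∃ d, IsGap C c d ∧ b ≤ c ∧ b - a ≤ d - c})

/-- The (Newhouse) thickness of a compact set `C ⊆ ℝ`: the infimum over all bounded gaps `G`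
of the ratio of the length of the bridge on either side of `G` to the length of `G`
(`∞` if `C` has no bounded gap). -/
noncomputable def thickness (C : Set ℝ) : ENNReal :=
  ⨅ p : {p : ℝ × ℝ // IsGap C p.1 p.2},
    ENNReal.ofReal
      (min ((p.1.1 - leftBridgeStart C p.1.1 p.1.2) / (p.1.2 - p.1.1))
        ((rightBridgeEnd C p.1.1 p.1.2 - p.1.2) / (p.1.2 - p.1.1)))

/-- `B` is contained in a gap of `A`, i.e. in a connected component of `ℝ \ A`. -/
def ContainedInGap (B A : Set ℝ) : Prop :=
  ∃ x ∈ Aᶜ, B ⊆ connectedComponentIn Aᶜ x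

/-- Two sets are interleaved if neither is contained in a gap of the other. -/
def Interleaved (A B : Set ℝ) : Prop :=
  ¬ContainedInGap B A ∧ ¬ContainedInGap A B

/-- `A` and `B` are `ε`-strongly interleaved: any compact sets within Hausdorff distance `ε`
of `A` and `B` respectively are interleaved. -/
def StronglyInterleaved (ε : ℝ) (A B : Set ℝ) : Prop :=
  ∀ A' B' : Set ℝ, IsCompact A' → IsCompact B' →
    EMetric.hausdorffEdist A A' ≤ ENNReal.ofReal ε →
    EMetric.hausdorffEdist B B' ≤ ENNReal.ofReal ε → Interleaved A' B'

/-- The sequence `0^{k-3}(01^{k-1})^∞` (0-indexed). -/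
noncomputable def seqG (k : ℕ) : ℕ → ℝ := fun j =>
  if j < k - 3 then 0 else if (j - (k - 3)) % k = 0 then 0 else 1

/-- The sequence `1^{k-3}(10^{k-1})^∞` (0-indexed). -/
noncomputable def seqH (k : ℕ) : ℕ → ℝ := fun j =>
  if j < k - 3 then 1 else if (j - (k - 3)) % k = 0 then 1 else 0

/-- The sequence `(1^{k-1}0)^∞` (0-indexed). -/
noncomputable def seqP (k : ℕ) : ℕ → ℝ := fun j => if j % k = k - 1 then 0 else 1


section Aux
variable {q : ℝ}

lemma digit_nonneg {a : ℕ → ℝ} (ha : IsDigitSeq a) (j : ℕ) : 0 ≤ a j := by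
  rcases ha j with h | h <;> simp [h]

lemma digit_le_one {a : ℕ → ℝ} (ha : IsDigitSeq a) (j : ℕ) : a j ≤ 1 := by
  rcases ha j with h | h <;> simp [h]

lemma geom_summable (hq : 1 < q) : Summable (fun j : ℕ => (1 / q) ^ (j + 1)) := by
  have h1 : |1 / q| < 1 := by
    rw [abs_of_pos (by positivity), div_lt_one (by linarith)]; linarith
  have := summable_geometric_of_abs_lt_one h1
  simpa [pow_succ] using this.mul_right (1 / q)

lemma piQ_summable (hq : 1 < q) {a : ℕ → ℝ} (ha : IsDigitSeq a) :
    Summable (fun j => a j / q ^ (j + 1)) := by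
  have hq0 : (0:ℝ) < q := by linarith
  refine Summable.of_nonneg_of_le
    (fun j => div_nonneg (digit_nonneg ha j) (by positivity)) (fun j => ?_) (geom_summable hq)
  rw [one_div, inv_pow, ← one_div]
  gcongr
  exact digit_le_one ha j

lemma piQ_nonneg (hq : 1 < q) {a : ℕ → ℝ} (ha : IsDigitSeq a) : 0 ≤ piQ q a :=
  tsum_nonneg (fun j => div_nonneg (digit_nonneg ha j) (by positivity))

lemma geom_tsum (hq : 1 < q) : ∑' j : ℕ, (1 / q) ^ (j + 1) = 1 / (q - 1) := by
  have h1 : |1 / q| < 1 := by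
    rw [abs_of_pos (by positivity), div_lt_one (by linarith)]; linarith
  have h := tsum_geometric_of_abs_lt_one h1
  have : ∑' j : ℕ, (1 / q) ^ (j + 1) = (∑' j : ℕ, (1 / q) ^ j) * (1 / q) := by
    rw [← tsum_mul_right]; simp [pow_succ]
  rw [this, h]
  have hq0 : q ≠ 0 := by linarith
  have hq1 : q - 1 ≠ 0 := by intro h; apply hq.ne'; linarith
  field_simp

lemma piQ_le (hq : 1 < q) {a : ℕ → ℝ} (ha : IsDigitSeq a) : piQ q a ≤ 1 / (q - 1) := by
  rw [← geom_tsum hq]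
  refine (piQ_summable hq ha).tsum_le_tsum (fun j => ?_) (geom_summable hq)
  rw [one_div, inv_pow, ← one_div]
  gcongr
  exact digit_le_one ha j

lemma piQ_shift (hq : 1 < q) {a : ℕ → ℝ} (ha : IsDigitSeq a) :
    piQ q a = a 0 / q + piQ q (fun j => a (j + 1)) / q := by
  have hs := piQ_summable hq ha
  have h0 := hs.tsum_eq_zero_add
  have hshift : IsDigitSeq (fun j => a (j + 1)) := fun j => ha (j + 1)
  have h2 : ∑' j : ℕ, a (j + 1) / q ^ (j + 1 + 1) =
      (∑' j : ℕ, a (j + 1) / q ^ (j + 1)) / q := by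
    rw [← tsum_div_const]
    congr 1; funext j
    rw [div_div, ← pow_succ]
  rw [piQ, h0, pow_one]
  rw [h2]
  rfl

end Aux

section Step
variable {q : ℝ}

lemma first_digit_forced (hq : q ∈ Set.Ioo (1:ℝ) 2) {x : ℝ} (hx : x ∈ Iq q \ Jq q)
    (b : Bool) (hy : fDigit q b x ∈ Iq q) :
    ∀ a ∈ SigmaSet q x, a 0 = (if b then (1:ℝ) else 0) := by
  obtain ⟨hq1, hq2⟩ := hq
  have hq0 : (0:ℝ) < q := by linarith
  have hqm1 : (0:ℝ) < q - 1 := by linarith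
  set bv : ℝ := if b then (1:ℝ) else 0 with hbv
  have hfx : fDigit q b x = q * x - bv := by
    cases b <;> simp [fDigit, hbv]
  rw [hfx] at hy
  obtain ⟨hxI, hxJ⟩ := hx
  obtain ⟨hx0, hx1⟩ := hxI
  have hcase : x < 1 / q ∨ 1 / (q * (q - 1)) < x := by
    by_contra h
    push_neg at h
    exact hxJ ⟨h.1, h.2⟩
  intro a ⟨ha, hpa⟩
  have hshift : IsDigitSeq (fun j => a (j + 1)) := fun j => ha (j + 1)
  have hsplit := piQ_shift hq1 ha
  rw [hpa] at hsplit
  rcases hcase with hlt | hgt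
  · -- x < 1/q : forced digit 0
    have hb0 : bv = 0 := by
      rcases b with _ | _
      · simp [hbv]
      · exfalso
        simp only [hbv, if_true] at hy
        have : (0:ℝ) ≤ q * x - 1 := hy.1
        have : 1 / q ≤ x := by rw [div_le_iff₀ hq0]; linarith [this]
        linarith
    have ha0 : a 0 ≠ 1 := by
      intro h1
      have hnn := piQ_nonneg hq1 hshift
      have : x ≥ 1 / q := by
        rw [hsplit, h1]
        have : 0 ≤ piQ q (fun j => a (j + 1)) / q := by positivity
        linarith
      linarith [lt_of_lt_of_le hlt this]
    rcases ha 0 with h | h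
    · rw [h, hb0]
    · exact absurd h ha0
  · -- x > 1/(q(q-1)) : forced digit 1
    have hb1 : bv = 1 := by
      rcases b with _ | _
      · exfalso
        simp only [hbv, if_false] at hy
        have h2 : q * x - 0 ≤ 1 / (q - 1) := hy.2
        have : x ≤ 1 / (q * (q - 1)) := by
          rw [le_div_iff₀ (by positivity)]
          calc x * (q * (q - 1)) = (q * x) * (q - 1) := by ring
            _ ≤ (1 / (q - 1)) * (q - 1) := by
                apply mul_le_mul_of_nonneg_right (by linarith) (le_of_lt hqm1)
            _ = 1 := by field_simp
        linarith
      · simp [hbv]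
    have ha0 : a 0 ≠ 0 := by
      intro h0
      have hle := piQ_le hq1 hshift
      have : x ≤ 1 / (q * (q - 1)) := by
        rw [hsplit, h0]
        have : piQ q (fun j => a (j + 1)) / q ≤ (1 / (q - 1)) / q := by
          apply div_le_div_of_nonneg_right hle hq0.le
        calc 0 / q + piQ q (fun j => a (j + 1)) / q
            = piQ q (fun j => a (j + 1)) / q := by ring
          _ ≤ (1 / (q - 1)) / q := this
          _ = 1 / (q * (q - 1)) := by field_simp
      linarith
    rcases ha 0 with h | h
    · exact absurd h ha0
    · rw [h, hb1]

lemma step_equiv (hq : q ∈ Set.Ioo (1:ℝ) 2) {x : ℝ} (hx : x ∈ Iq q \ Jq q)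
    (b : Bool) (hy : fDigit q b x ∈ Iq q) :
    Nonempty (↥(SigmaSet q x) ≃ ↥(SigmaSet q (fDigit q b x))) := by
  obtain ⟨hq1, hq2⟩ := hq
  have hq0 : (0:ℝ) < q := by linarith
  set bv : ℝ := if b then (1:ℝ) else 0 with hbv
  have hfx : fDigit q b x = q * x - bv := by cases b <;> simp [fDigit, hbv]
  have hforced := first_digit_forced ⟨hq1, hq2⟩ hx b hy
  have hbv01 : bv = 0 ∨ bv = 1 := by cases b <;> simp [hbv]
  refine ⟨{
    toFun := fun a => ⟨fun j => a.1 (j + 1), ?_, ?_⟩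
    invFun := fun a => ⟨fun j => if j = 0 then bv else a.1 (j - 1), ?_, ?_⟩
    left_inv := ?_
    right_inv := ?_ }⟩
  · exact fun j => a.2.1 (j + 1)
  · -- piQ of shift = q*x - bv
    have hsplit := piQ_shift hq1 a.2.1
    rw [a.2.2, hforced a.1 a.2, ← hbv, ← add_div,
      eq_div_iff (ne_of_gt hq0)] at hsplit
    rw [hfx]
    linarith
  · intro j
    cases j with
    | zero => simpa using hbv01
    | succ n => simpa using a.2.1 n
  · -- piQ of cons = x
    have hcons : IsDigitSeq (fun j => if j = 0 then bv else a.1 (j - 1)) := by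
      intro j
      cases j with
      | zero => simpa using hbv01
      | succ n => simpa using a.2.1 n
    have hsplit := piQ_shift hq1 hcons
    have hsh : (fun j => if j + 1 = 0 then bv else a.1 (j + 1 - 1)) = a.1 := by
      funext j; simp
    simp only [hsh] at hsplit
    rw [hsplit]
    simp only [if_pos rfl, if_true, a.2.2, hfx, ← hbv]
    rw [← add_div, show bv + (q * x - bv) = q * x by ring,
      mul_div_cancel_left₀ _ (ne_of_gt hq0)]
  · intro a
    apply Subtype.ext
    funext j
    cases j with
    | zero => simpa using (hforced a.1 a.2).symm
    | succ n => simp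
  · intro a
    apply Subtype.ext
    funext j
    simp

end Step

theorem maps_uniquely_to_preserves_card
    (q : ℝ) (hq : q ∈ Set.Ioo (1 : ℝ) 2) (x y : ℝ) (m : ℕ)
    (w : ℕ → Bool) (o : ℕ → ℝ)
    (ho0 : o 0 = x) (hstep : ∀ j < m, o (j + 1) = fDigit q (w j) (o j)) (hom : o m = y)
    (hx : x ∈ Iq q \ Jq q) (hy : y ∈ Iq q)
    (hmid : ∀ j, 1 ≤ j → j ≤ m - 1 → o j ∈ Iq q \ Jq q) :
    Nonempty (↥(SigmaSet q x) ≃ ↥(SigmaSet q y)) := by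
  have key : ∀ j, j ≤ m → Nonempty (↥(SigmaSet q x) ≃ ↥(SigmaSet q (o j))) := by
    intro j
    induction j with
    | zero => intro _; rw [ho0]; exact ⟨Equiv.refl _⟩
    | succ n ih =>
      intro hnm
      obtain ⟨e⟩ := ih (by omega)
      have hon : o n ∈ Iq q \ Jq q := by
        rcases Nat.eq_zero_or_pos n with h0 | hpos
        · rw [h0, ho0]; exact hx
        · exact hmid n hpos (by omega)
      have hstep' := hstep n (by omega)
      have hnext : fDigit q (w n) (o n) ∈ Iq q := by
        rw [← hstep']
        rcases eq_or_lt_of_le hnm with heq | hlt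
        · rw [heq, hom]; exact hy
        · exact (hmid (n + 1) (by omega) (by omega)).1
      obtain ⟨e2⟩ := step_equiv hq hon (w n) hnext
      rw [← hstep'] at e2
      exact ⟨e.trans e2⟩
  obtain ⟨e⟩ := key m le_rfl
  rw [hom] at e
  exact ⟨e⟩
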